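/- For every w ∈ ℂ and every ball B centered at w, ∫_B e^{−π|z|²} |e^{π w̄ z}|² dA(z) = e^{π|w|²} (1 − e^{−|B|}). -/

import Mathlib

open Real MeasureTheory Set

lemma radial_int (r : ℝ) (hr : 0 < r) :
    ∫ x in Ioo (0:ℝ) r, x * Real.exp (-Real.pi * x ^ 2)
      = (1 - Real.exp (-(Real.pi * r ^ 2))) / (2 * Real.pi) := by
  rw [← integral_Ioc_eq_integral_Ioo, ← intervalIntegral.integral_of_le hr.le]
  have : ∀ x ∈ Set.uIcc (0:ℝ) r, HasDerivAt (fun x => -Real.exp (-Real.pi * x ^ 2) / (2 * Real.pi))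
      (x * Real.exp (-Real.pi * x ^ 2)) x := by
    intro x _
    have h1 : HasDerivAt (fun x : ℝ => -Real.pi * x ^ 2) (-Real.pi * (2 * x)) x := by
      simpa using ((hasDerivAt_pow 2 x).const_mul (-Real.pi))
    have h2 := (h1.exp.neg.div_const (2 * Real.pi))
    convert h2 using 1
    · rfl
    · rfl
    · rfl
    rw [eq_div_iff (by positivity)]
    ring
  rw [intervalIntegral.integral_eq_sub_of_hasDerivAt this]
  · simp
    field_simp
    ring
  · apply ContinuousOn.intervalIntegrable
    fun_prop

lemma gauss_ball (r : ℝ) (hr : 0 < r) :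
    ∫ z in Metric.ball (0:ℂ) r, Real.exp (-Real.pi * ‖z‖ ^ 2)
      = 1 - Real.exp (-(Real.pi * r ^ 2)) := by
  have key := Complex.integral_comp_polarCoord_symm
    ((Metric.ball (0:ℂ) r).indicator (fun z => Real.exp (-Real.pi * ‖z‖ ^ 2)))
  rw [← integral_indicator Metric.isOpen_ball.measurableSet, ← key]
  have heq : ∀ p ∈ polarCoord.target,
      p.1 • ((Metric.ball (0:ℂ) r).indicator (fun z => Real.exp (-Real.pi * ‖z‖ ^ 2))
        (Complex.polarCoord.symm p))
      = (Ioo (0:ℝ) r ×ˢ Ioo (-Real.pi) Real.pi).indicator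
          (fun p : ℝ × ℝ => p.1 * Real.exp (-Real.pi * p.1 ^ 2)) p := by
    rintro ⟨x, y⟩ hp
    rw [polarCoord_target] at hp
    obtain ⟨hx, hy⟩ := hp
    simp only [Set.mem_Ioi] at hx
    have habs : ‖Complex.polarCoord.symm (x, y)‖ = x := by
      rw [Complex.norm_polarCoord_symm]; exact abs_of_pos hx
    by_cases hxr : x < r
    · rw [Set.indicator_of_mem, Set.indicator_of_mem]
      · simp [habs, smul_eq_mul]
      · exact ⟨⟨hx, hxr⟩, hy⟩
      · simp [Metric.mem_ball, Complex.dist_eq, habs, abs_of_pos hx, hxr]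
    · rw [Set.indicator_of_notMem, Set.indicator_of_notMem]
      · simp
      · simp only [Set.mem_prod, Set.mem_Ioo]; tauto
      · simp [Metric.mem_ball, Complex.dist_eq, habs, abs_of_pos hx, hxr]
  rw [setIntegral_congr_fun polarCoord.open_target.measurableSet heq,
    setIntegral_indicator (by measurability)]
  have hsub : (Ioo (0:ℝ) r ×ˢ Ioo (-Real.pi) Real.pi) ⊆ polarCoord.target := by
    rw [polarCoord_target]
    exact Set.prod_mono (Set.Ioo_subset_Ioi_self) le_rfl
  rw [Set.inter_eq_self_of_subset_right hsub]
  have : ∫ p in Ioo (0:ℝ) r ×ˢ Ioo (-Real.pi) Real.pi,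
      p.1 * Real.exp (-Real.pi * p.1 ^ 2)
      = (∫ x in Ioo (0:ℝ) r, x * Real.exp (-Real.pi * x ^ 2)) * ∫ y in Ioo (-Real.pi) Real.pi, (1:ℝ) := by
    rw [Measure.volume_eq_prod, ← setIntegral_prod_mul
      (fun x => x * Real.exp (-Real.pi * x ^ 2)) (fun _ => (1:ℝ))]
    simp
  rw [this, radial_int r hr, setIntegral_const, Real.volume_real_Ioo_of_le (by linarith [Real.pi_pos]), smul_eq_mul, mul_one]
  have hπ : (2:ℝ) * Real.pi ≠ 0 := by positivity
  rw [sub_neg_eq_add, ← two_mul, div_mul_cancel₀ _ hπ]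

theorem kernel_integral_ball (w : ℂ) (r : ℝ) (hr : 0 < r) :
    ∫ z in Metric.ball w r,
        Real.exp (-Real.pi * ‖z‖ ^ 2)
          * ‖Complex.exp ((Real.pi : ℂ) * (starRingEnd ℂ) w * z)‖ ^ 2
      = Real.exp (Real.pi * ‖w‖ ^ 2)
          * (1 - Real.exp (-(volume (Metric.ball w r)).toReal)) := by
  have hvol : (volume (Metric.ball w r)).toReal = Real.pi * r ^ 2 := by
    rw [Complex.volume_ball, ENNReal.toReal_mul, ENNReal.toReal_pow,
      ENNReal.toReal_ofReal hr.le, ENNReal.coe_toReal, NNReal.coe_real_pi, mul_comm]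
  have hpt : ∀ z : ℂ, Real.exp (-Real.pi * ‖z‖ ^ 2)
      * ‖Complex.exp ((Real.pi : ℂ) * (starRingEnd ℂ) w * z)‖ ^ 2
      = Real.exp (Real.pi * ‖w‖ ^ 2)
          * Real.exp (-Real.pi * ‖z - w‖ ^ 2) := by
    intro z
    rw [Complex.norm_exp,
      pow_two (Real.exp (((Real.pi : ℂ) * (starRingEnd ℂ) w * z).re)),
      ← Real.exp_add, ← Real.exp_add, ← Real.exp_add]
    congr 1
    simp only [Complex.sq_norm, Complex.normSq_apply, Complex.mul_re, Complex.mul_im,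
      Complex.conj_re, Complex.conj_im, Complex.ofReal_re, Complex.ofReal_im,
      Complex.sub_re, Complex.sub_im]
    ring
  simp only [hpt]
  rw [MeasureTheory.integral_const_mul]
  have htrans := (measurePreserving_add_right volume w).setIntegral_preimage_emb
    (measurableEmbedding_addRight w)
    (fun z => Real.exp (-Real.pi * ‖z - w‖ ^ 2)) (Metric.ball w r)
  have hpre : (· + w) ⁻¹' Metric.ball w r = Metric.ball (0:ℂ) r := by
    ext z
    simp [Metric.mem_ball, Complex.dist_eq, add_sub_cancel_right]
  rw [hpre] at htrans
  simp only [add_sub_cancel_right] at htrans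
  rw [← htrans, gauss_ball r hr, hvol]
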